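/- For n ≥ 2, a 4-modular Hadamard matrix of order n exists if and only if n = 2 or n ≡ 0 (mod 4). -/

import Mathlib

open Matrix

/-- `H` is an `m`-modular Hadamard matrix of order `n`: a ±1 matrix with
`H * Hᵀ ≡ n • I (mod m)`. -/
def IsMHadamard (m n : ℕ) {ι : Type} [Fintype ι] [DecidableEq ι]
    (H : Matrix ι ι ℤ) : Prop :=
  (∀ i j, H i j = 1 ∨ H i j = -1) ∧
  ∀ i j, (H * Hᵀ) i j ≡ (if i = j then (n : ℤ) else 0) [ZMOD m]

theorem stmt_9 (n : ℕ) (hn : 2 ≤ n) :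
    (∃ H : Matrix (Fin n) (Fin n) ℤ, IsMHadamard 4 n H) ↔ (n = 2 ∨ n % 4 = 0) := by
  constructor
  · rintro ⟨H, h1, h2⟩
    by_cases h2n : n = 2
    · exact Or.inl h2n
    right
    have hn3 : 3 ≤ n := by omega
    set a : Fin n := ⟨0, by omega⟩
    set b : Fin n := ⟨1, by omega⟩
    set c : Fin n := ⟨2, by omega⟩
    have key : ∀ i j : Fin n, i ≠ j → (4:ℤ) ∣ ∑ k, H i k * H j k := by
      intro i j hij
      have h := h2 i j
      rw [if_neg hij] at h
      have h' : (4:ℤ) ∣ (H * Hᵀ) i j := (Int.modEq_zero_iff_dvd).mp h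
      simpa [Matrix.mul_apply, Matrix.transpose_apply] using h'
    obtain ⟨x, hx⟩ := key a b (by simp [a, b, Fin.ext_iff])
    obtain ⟨y, hy⟩ := key a c (by simp [a, c, Fin.ext_iff])
    obtain ⟨z, hz⟩ := key b c (by simp [b, c, Fin.ext_iff])
    have expand : ∀ k, (H a k + H b k + H c k)^2 =
        3 + 2*(H a k * H b k) + 2*(H a k * H c k) + 2*(H b k * H c k) := by
      intro k
      rcases h1 a k with e1|e1 <;> rcases h1 b k with e2|e2 <;> rcases h1 c k with e3|e3 <;>
        rw [e1, e2, e3] <;> norm_num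
    have hodd : ∀ k, (8:ℤ) ∣ (H a k + H b k + H c k)^2 - 1 := by
      intro k
      rcases h1 a k with e1|e1 <;> rcases h1 b k with e2|e2 <;> rcases h1 c k with e3|e3 <;>
        rw [e1, e2, e3] <;> decide
    have hdvd : (8:ℤ) ∣ ∑ k, ((H a k + H b k + H c k)^2 - 1) :=
      Finset.dvd_sum fun k _ => hodd k
    have hsum : ∑ k, ((H a k + H b k + H c k)^2 - 1)
        = 2*n + 2*(4*x) + 2*(4*y) + 2*(4*z) := by
      rw [← hx, ← hy, ← hz]
      simp only [expand, Finset.sum_sub_distrib, Finset.sum_add_distrib, Finset.sum_const,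
        Finset.card_univ, Fintype.card_fin, ← Finset.mul_sum]
      push_cast
      ring
    rw [hsum] at hdvd
    obtain ⟨w, hw⟩ := hdvd
    have h4 : (4:ℤ) ∣ (n:ℤ) := ⟨w - x - y - z, by linarith⟩
    have : 4 ∣ n := by exact_mod_cast h4
    omega
  · rintro (rfl | h4)
    · refine ⟨!![1, 1; 1, -1], ?_, ?_⟩
      · intro i j
        fin_cases i <;> fin_cases j <;> decide
      · intro i j
        fin_cases i <;> fin_cases j <;> decide
    · refine ⟨Matrix.of fun i j => if i = j then -1 else 1, ?_, ?_⟩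
      · intro i j; dsimp only [Matrix.of_apply]; split <;> simp
      · intro i j
        have hmul : (Matrix.of (fun i j : Fin n => if i = j then (-1:ℤ) else 1) *
            (Matrix.of (fun i j : Fin n => if i = j then (-1:ℤ) else 1))ᵀ) i j
            = ∑ k, (if i = k then (-1:ℤ) else 1) * (if j = k then (-1:ℤ) else 1) := by
          simp [Matrix.mul_apply, Matrix.transpose_apply, eq_comm]
        rw [hmul]
        by_cases hij : i = j
        · subst hij
          rw [if_pos rfl]
          have : ∀ k, (if i = k then (-1:ℤ) else 1) * (if i = k then (-1:ℤ) else 1) = 1 := by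
            intro k; split <;> ring
          simp only [this, Finset.sum_const, Finset.card_univ, Fintype.card_fin, nsmul_eq_mul,
            mul_one]
          rfl
        · rw [if_neg hij]
          have hterm : ∀ k, (if i = k then (-1:ℤ) else 1) * (if j = k then (-1:ℤ) else 1)
              = 1 - 2*(if i = k then (1:ℤ) else 0) - 2*(if j = k then (1:ℤ) else 0) := by
            intro k
            by_cases h1 : i = k <;> by_cases h2 : j = k <;>
              simp_all <;> omega
          simp only [hterm, Finset.sum_sub_distrib, Finset.sum_const, Finset.card_univ,
            Fintype.card_fin, ← Finset.mul_sum, Finset.sum_ite_eq, Finset.mem_univ, if_pos]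
          rw [Int.modEq_zero_iff_dvd]
          have h4' : (4:ℤ) ∣ (n:ℤ) := by exact_mod_cast (Nat.dvd_of_mod_eq_zero h4)
          ring_nf
          omega
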